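/- arXiv:2603.00970 — 2 statements merged into one kernel-verified Lean document; each statement's English description precedes it below -/
import Mathlib

section
/- Let R be a commutative ring, M a w-module over R, and M_1, …, M_n pairwise non-isomorphic w-simple R-submodules of M. Then the sum Σ_{i=1}^n M_i is direct, i.e., Σ_{i=1}^n M_i = ⊕_{i=1}^n M_i (the family {M_i} is independent). -/
universe u v

section WDefs

variable (R : Type u) [CommRing R]

/-- The canonical `R`-linear map `R → Hom_R(J, R)`, `r ↦ (j ↦ r * j)`. -/
def gvCanonicalMap (J : Ideal R) : R →ₗ[R] (J →ₗ[R] R) where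
  toFun r := r • (J.subtype)
  map_add' x y := add_smul x y _
  map_smul' r x := by simp [mul_smul]

/-- A finitely generated ideal `J` of `R` is a GV-ideal (Glaz–Vasconcelos ideal)
if the canonical map `R → Hom_R(J, R)` is an isomorphism. -/
def IsGVIdeal (J : Ideal R) : Prop :=
  J.FG ∧ Function.Bijective (gvCanonicalMap R J)

/-- An ideal `I` of `R` is a w-ideal if whenever `J x ⊆ I` for some GV-ideal `J`,
then `x ∈ I`. -/
def IsWIdeal (I : Ideal R) : Prop :=
  ∀ x : R, (∃ J : Ideal R, IsGVIdeal R J ∧ ∀ j ∈ J, j * x ∈ I) → x ∈ I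

/-- `m` is a maximal w-ideal: maximal among the proper w-ideals of `R`. -/
def IsMaxWIdeal (m : Ideal R) : Prop :=
  IsWIdeal R m ∧ m ≠ ⊤ ∧ ∀ I : Ideal R, IsWIdeal R I → I ≠ ⊤ → m ≤ I → I = m

variable {M : Type v} [AddCommGroup M] [Module R M]

/-- `x` is a GV-torsion element if it is killed by some GV-ideal. -/
def IsGVTorsionElem (x : M) : Prop :=
  ∃ J : Ideal R, IsGVIdeal R J ∧ ∀ j ∈ J, j • x = 0

variable (M)

/-- `M` is GV-torsion-free if it has no nonzero GV-torsion element. -/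
def IsGVTorsionFree : Prop := ∀ x : M, IsGVTorsionElem R x → x = 0

/-- `M` is GV-torsion if all its elements are GV-torsion. -/
def IsGVTorsion : Prop := ∀ x : M, IsGVTorsionElem R x

/-- `M` is a w-module: GV-torsion-free and every map from a GV-ideal to `M`
extends to `R`. -/
def IsWModule : Prop :=
  IsGVTorsionFree R M ∧
    ∀ J : Ideal R, IsGVIdeal R J → ∀ f : J →ₗ[R] M,
      ∃ g : R →ₗ[R] M, ∀ x : J, g (x : R) = f x

end WDefs

/-- `K` is a w-submodule of `M`: whenever `J x ⊆ K` for some GV-ideal `J` (with `x ∈ M`),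
then `x ∈ K`. -/
def IsWSubmodule (R : Type u) [CommRing R] {M : Type v} [AddCommGroup M] [Module R M]
    (K : Submodule R M) : Prop :=
  ∀ x : M, (∃ J : Ideal R, IsGVIdeal R J ∧ ∀ j ∈ J, j • x ∈ K) → x ∈ K

/-- `T` is a w-simple submodule of `M`: `T` is a nonzero w-submodule whose only
w-submodules (submodules of `T` closed under the relative w-operation) are `0` and `T`. -/
def IsWSimpleSubmodule (R : Type u) [CommRing R] {M : Type v} [AddCommGroup M] [Module R M]
    (T : Submodule R M) : Prop :=
  IsWSubmodule R T ∧ T ≠ ⊥ ∧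
    ∀ K : Submodule R M, K ≤ T →
      (∀ x ∈ T, (∃ J : Ideal R, IsGVIdeal R J ∧ ∀ j ∈ J, j • x ∈ K) → x ∈ K) →
        K = ⊥ ∨ K = T


section Aux
variable {R : Type u} [CommRing R] {M : Type v} [AddCommGroup M] [Module R M]

theorem gv_ann {J : Ideal R} (hJ : IsGVIdeal R J) {r : R} (hr : ∀ j ∈ J, j * r = 0) :
    r = 0 := by
  have h0 : gvCanonicalMap R J r = gvCanonicalMap R J 0 := by
    refine LinearMap.ext fun x => ?_
    have : r * (x : R) = 0 := by rw [mul_comm]; exact hr x x.2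
    simpa [gvCanonicalMap] using this
  exact hJ.2.1 h0

theorem gv_rep {J : Ideal R} (hJ : IsGVIdeal R J) (f : J →ₗ[R] R) :
    ∃ r : R, ∀ x : J, f x = r * (x : R) := by
  obtain ⟨r, hr⟩ := hJ.2.2 f
  exact ⟨r, fun x => by rw [← hr]; simp [gvCanonicalMap]⟩

theorem gv_top : IsGVIdeal R (⊤ : Ideal R) := by
  refine ⟨⟨{1}, by simp⟩, ?_, ?_⟩
  · intro a b hab
    have := congrArg (fun g => g (⟨1, trivial⟩ : (⊤ : Ideal R))) hab
    simpa [gvCanonicalMap] using this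
  · intro f
    refine ⟨f ⟨1, trivial⟩, ?_⟩
    refine LinearMap.ext fun x => ?_
    have h1 : (x : R) • (⟨1, trivial⟩ : (⊤ : Ideal R)) = x := Subtype.ext (by simp)
    rw [← h1, f.map_smul, smul_eq_mul]
    simp [gvCanonicalMap, mul_comm]

theorem gv_mul {J₁ J₂ : Ideal R} (h₁ : IsGVIdeal R J₁) (h₂ : IsGVIdeal R J₂) :
    IsGVIdeal R (J₁ * J₂) := by
  have hann : ∀ r : R, (∀ j ∈ J₁ * J₂, j * r = 0) → r = 0 := by
    intro r hr
    refine gv_ann h₁ fun a ha => gv_ann h₂ fun b hb => ?_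
    have h := hr (a * b) (Ideal.mul_mem_mul ha hb)
    linear_combination h
  refine ⟨Submodule.FG.mul h₁.1 h₂.1, ?_, ?_⟩
  · intro a b hab
    have h0 : a - b = 0 := by
      refine hann _ fun j hj => ?_
      have hh : a * j = b * j := by
        simpa [gvCanonicalMap] using congrArg (fun g => g (⟨j, hj⟩ : (J₁ * J₂ : Ideal R))) hab
      linear_combination hh
    exact sub_eq_zero.mp h0
  · intro f
    have key : ∀ a : J₁, ∃ r : R, (∀ b : J₂, f ⟨(a : R) * b, Ideal.mul_mem_mul a.2 b.2⟩ = r * b)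
        ∧ ∀ r' : R, (∀ b : J₂, f ⟨(a : R) * b, Ideal.mul_mem_mul a.2 b.2⟩ = r' * b) → r' = r := by
      intro a
      set fa : J₂ →ₗ[R] R :=
        { toFun := fun b => f ⟨(a : R) * b, Ideal.mul_mem_mul a.2 b.2⟩
          map_add' := fun b c => by
            rw [← f.map_add]
            exact congrArg f (Subtype.ext (by push_cast; ring))
          map_smul' := fun r b => by
            rw [← f.map_smul]
            refine congrArg f (Subtype.ext ?_)
            push_cast [smul_eq_mul, RingHom.id_apply]
            ring } with hfa
      obtain ⟨r, hr⟩ := gv_rep h₂ fa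
      refine ⟨r, fun b => hr b, ?_⟩
      intro r' hr'
      refine sub_eq_zero.mp (gv_ann h₂ fun b hb => ?_)
      have := (hr' ⟨b, hb⟩).symm.trans (hr ⟨b, hb⟩)
      linear_combination this
    choose rr hP hU using key
    set g : J₁ →ₗ[R] R :=
      { toFun := rr
        map_add' := fun a a' => by
          refine (hU (a + a') (rr a + rr a') fun b => ?_).symm
          have e : (⟨((a + a' : J₁) : R) * b, Ideal.mul_mem_mul (a + a').2 b.2⟩ : (J₁ * J₂ : Ideal R))
              = ⟨(a : R) * b, Ideal.mul_mem_mul a.2 b.2⟩ + ⟨(a' : R) * b, Ideal.mul_mem_mul a'.2 b.2⟩ :=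
            Subtype.ext (by push_cast; ring)
          rw [e, f.map_add, hP a b, hP a' b]; ring
        map_smul' := fun r a => by
          have h := (hU (r • a) (r * rr a) fun b => ?_).symm
          · simpa using h
          · have e : (⟨((r • a : J₁) : R) * b, Ideal.mul_mem_mul (r • a).2 b.2⟩ : (J₁ * J₂ : Ideal R))
                = r • ⟨(a : R) * b, Ideal.mul_mem_mul a.2 b.2⟩ :=
              Subtype.ext (by push_cast [smul_eq_mul]; ring)
            rw [e, f.map_smul, hP a b]; push_cast [smul_eq_mul]; ring } with hg
    obtain ⟨r, hrg⟩ := gv_rep h₁ g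
    have hx : ∀ (x : R) (hx : x ∈ J₁ * J₂), f ⟨x, hx⟩ = r * x := by
      intro x hx
      refine Submodule.mul_induction_on' (C := fun x hx => f ⟨x, hx⟩ = r * x) ?_ ?_ hx
      · intro a ha b hb
        have h1 := hP ⟨a, ha⟩ ⟨b, hb⟩
        have h2 : rr ⟨a, ha⟩ = r * a := hrg ⟨a, ha⟩
        rw [h1, h2]  -- hopefully defeq on membership proofs
        ring
      · intro u hu v hv h1 h2
        have e : (⟨u + v, add_mem hu hv⟩ : (J₁ * J₂ : Ideal R)) = ⟨u, hu⟩ + ⟨v, hv⟩ :=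
          Subtype.ext (by simp)
        rw [e, f.map_add, h1, h2]; ring
    exact ⟨r, LinearMap.ext fun x => by simpa [gvCanonicalMap] using (hx x.1 x.2).symm⟩

end Aux

section Aux2
variable {R : Type u} [CommRing R] {M : Type v} [AddCommGroup M] [Module R M]

theorem tf_eq (tf : IsGVTorsionFree R M) {J : Ideal R} (hJ : IsGVIdeal R J) {y y' : M}
    (h : ∀ j ∈ J, j • y = j • y') : y = y' := by
  have h0 : y - y' = 0 := tf _ ⟨J, hJ, fun j hj => by rw [smul_sub, h j hj, sub_self]⟩
  exact sub_eq_zero.mp h0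

theorem w_ext (hM : IsWModule R M) {J : Ideal R} (hJ : IsGVIdeal R J) (f : J →ₗ[R] M) :
    ∃ y : M, ∀ j : J, (j : R) • y = f j := by
  obtain ⟨g, hg⟩ := hM.2 J hJ f
  exact ⟨g 1, fun j => by rw [← hg j, ← g.map_smul, smul_eq_mul, mul_one]⟩

/-- The w-envelope of a submodule inside the ambient module. -/
def wEnv (P : Submodule R M) : Submodule R M where
  carrier := {y | ∃ J : Ideal R, IsGVIdeal R J ∧ ∀ j ∈ J, j • y ∈ P}
  zero_mem' := ⟨⊤, gv_top, fun j _ => by simpa using P.zero_mem⟩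
  add_mem' := by
    rintro y z ⟨J₁, hJ₁, hy⟩ ⟨J₂, hJ₂, hz⟩
    refine ⟨J₁ * J₂, gv_mul hJ₁ hJ₂, fun j hj => ?_⟩
    have h1 : j • y ∈ P := hy j (Ideal.mul_le_left hj)
    have h2 : j • z ∈ P := hz j (Ideal.mul_le_right hj)
    simpa [smul_add] using P.add_mem h1 h2
  smul_mem' := by
    rintro r y ⟨J, hJ, hy⟩
    exact ⟨J, hJ, fun j hj => by rw [smul_comm]; exact P.smul_mem r (hy j hj)⟩

theorem mem_wEnv {P : Submodule R M} {y : M} :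
    y ∈ wEnv P ↔ ∃ J : Ideal R, IsGVIdeal R J ∧ ∀ j ∈ J, j • y ∈ P := Iff.rfl

theorem le_wEnv {P : Submodule R M} : P ≤ wEnv P :=
  fun y hy => ⟨⊤, gv_top, fun j _ => P.smul_mem j hy⟩

theorem gv_common {P : Submodule R M} (t : Finset M) (h : ∀ z ∈ t, z ∈ wEnv P) :
    ∃ Jc : Ideal R, IsGVIdeal R Jc ∧ ∀ c ∈ Jc, ∀ z ∈ t, c • z ∈ P := by
  classical
  induction t using Finset.induction with
  | empty => exact ⟨⊤, gv_top, fun c _ z hz => absurd hz (Finset.notMem_empty z)⟩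
  | @insert z t hz ih =>
    obtain ⟨Jc, hJc, hc⟩ := ih fun w hw => h w (Finset.mem_insert_of_mem hw)
    obtain ⟨Jz, hJz, hzP⟩ := h z (Finset.mem_insert_self _ _)
    refine ⟨Jz * Jc, gv_mul hJz hJc, fun c hcmem w hw => ?_⟩
    rcases Finset.mem_insert.mp hw with rfl | hw
    · exact hzP c (Ideal.mul_le_left hcmem)
    · exact hc c (Ideal.mul_le_right hcmem) w hw

theorem wEnv_closed {P : Submodule R M} {y : M} {J : Ideal R} (hJ : IsGVIdeal R J)
    (h : ∀ j ∈ J, j • y ∈ wEnv P) : y ∈ wEnv P := by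
  classical
  obtain ⟨sg, hsg⟩ := hJ.1
  have himg : ∀ z ∈ sg.image fun a => a • y, z ∈ wEnv P := by
    intro w hw
    obtain ⟨a, ha, rfl⟩ := Finset.mem_image.mp hw
    have haJ : a ∈ J := by rw [← hsg]; exact Submodule.subset_span ha
    exact h a haJ
  obtain ⟨Jc, hJc, hc⟩ := gv_common (P := P) (sg.image fun a => a • y) himg
  · -- the auxiliary submodule of elements divisible into P by Jc
    set Q : Submodule R M :=
      { carrier := {w | ∀ c ∈ Jc, c • w ∈ P}
        zero_mem' := fun c _ => by simpa using P.zero_mem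
        add_mem' := fun {u v} hu hv c hcm => by
          simpa [smul_add] using P.add_mem (hu c hcm) (hv c hcm)
        smul_mem' := fun r w hw c hcm => by
          rw [smul_comm]; exact P.smul_mem r (hw c hcm) } with hQ
    have hspan : ∀ m ∈ J, m • y ∈ Q := by
      intro m hm
      rw [← hsg] at hm
      induction hm using Submodule.span_induction with
      | mem a ha =>
        intro c hcm
        exact hc c hcm _ (Finset.mem_image_of_mem _ ha)
      | zero => simpa using Q.zero_mem
      | add a b _ _ iha ihb => simpa [add_smul] using Q.add_mem iha ihb
      | smul r a _ iha =>
        have : (r * a) • y = r • (a • y) := mul_smul r a y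
        rw [smul_eq_mul, this]
        exact Q.smul_mem r iha
    refine ⟨J * Jc, gv_mul hJ hJc, fun g hg => ?_⟩
    refine Submodule.mul_induction_on hg (fun m hm c hcm => ?_) (fun u v hu hv => ?_)
    · rw [mul_comm, mul_smul]
      exact hspan m hm c hcm
    · simpa [add_smul] using P.add_mem hu hv

end Aux2
section Aux3
variable {R : Type u} [CommRing R] {M : Type v} [AddCommGroup M] [Module R M]

variable {n : ℕ}

/-- A decomposition of `y` along the family `T` over the finset `s`. -/
def DecompOf (T : Fin n → Submodule R M) (s : Finset (Fin n)) (y : M) (c : Fin n → M) : Prop :=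
  (∀ j, c j ∈ T j) ∧ y = ∑ j ∈ s, c j

theorem exists_decomp {T : Fin n → Submodule R M} {s : Finset (Fin n)} :
    ∀ y ∈ s.sup T, ∃ c : Fin n → M, DecompOf T s y c := by
  classical
  induction s using Finset.induction with
  | empty =>
    intro y hy
    rw [Finset.sup_empty, Submodule.mem_bot] at hy
    exact ⟨fun _ => 0, fun j => (T j).zero_mem, by simpa using hy⟩
  | @insert a t ha ih =>
    intro y hy
    rw [Finset.sup_insert] at hy
    obtain ⟨u, hu, v, hv, rfl⟩ := Submodule.mem_sup.mp hy
    obtain ⟨c, hc, hsum⟩ := ih v hv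
    refine ⟨fun j => if j = a then u else c j, fun j => ?_, ?_⟩
    · by_cases hj : j = a
      · subst hj; simpa using hu
      · simpa [hj] using hc j
    · rw [Finset.sum_insert ha, if_pos rfl]
      congr 1
      rw [hsum]
      exact Finset.sum_congr rfl fun j hj => by rw [if_neg (by rintro rfl; exact ha hj)]

/-- Relative disjointness of the family over `s`. -/
def HDis (T : Fin n → Submodule R M) (s : Finset (Fin n)) : Prop :=
  ∀ j0 ∈ s, ∀ y, y ∈ T j0 → y ∈ (s.erase j0).sup T → y = 0

theorem decomp_unique {T : Fin n → Submodule R M} {s : Finset (Fin n)} (hdis : HDis T s)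
    {y : M} {c c' : Fin n → M} (hc : DecompOf T s y c) (hc' : DecompOf T s y c') :
    ∀ j0 ∈ s, c j0 = c' j0 := by
  intro j0 hj0
  have hsum : ∑ j ∈ s, c j = ∑ j ∈ s, c' j := hc.2.symm.trans hc'.2
  have e1 : c j0 + ∑ j ∈ s.erase j0, c j = c' j0 + ∑ j ∈ s.erase j0, c' j := by
    rwa [Finset.add_sum_erase s c hj0, Finset.add_sum_erase s c' hj0]
  have h2 : c j0 - c' j0 = ∑ j ∈ s.erase j0, (c' j - c j) := by
    rw [Finset.sum_sub_distrib, sub_eq_sub_iff_add_eq_add, e1]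
    abel
  have hmem2 : c j0 - c' j0 ∈ (s.erase j0).sup T := by
    rw [h2]
    refine Submodule.sum_mem _ fun j hj => ?_
    exact Finset.le_sup (f := T) hj (Submodule.sub_mem _ (hc'.1 j) (hc.1 j))
  have hmem1 : c j0 - c' j0 ∈ T j0 := Submodule.sub_mem _ (hc.1 j0) (hc'.1 j0)
  have := hdis j0 hj0 _ hmem1 hmem2
  exact sub_eq_zero.mp this

open scoped Classical in
/-- The `j0`-component of `y` with respect to the (direct) decomposition over `s`. -/
noncomputable def compFun (T : Fin n → Submodule R M) (s : Finset (Fin n)) (j0 : Fin n)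
    (y : M) : M :=
  if h : ∃ c : Fin n → M, DecompOf T s y c then h.choose j0 else 0

theorem compFun_mem {T : Fin n → Submodule R M} {s : Finset (Fin n)} (j0 : Fin n) (y : M) :
    compFun T s j0 y ∈ T j0 := by
  unfold compFun
  split
  · next h => exact h.choose_spec.1 j0
  · exact (T j0).zero_mem

theorem compFun_decomp {T : Fin n → Submodule R M} {s : Finset (Fin n)} {y : M}
    (hy : y ∈ s.sup T) : DecompOf T s y (fun j => compFun T s j y) := by
  have h : ∃ c : Fin n → M, DecompOf T s y c := exists_decomp y hy
  have e : ∀ j, compFun T s j y = h.choose j := by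
    intro j; unfold compFun; rw [dif_pos h]
  refine ⟨fun j => ?_, ?_⟩
  · show compFun T s j y ∈ T j
    rw [e j]; exact h.choose_spec.1 j
  · calc y = ∑ j ∈ s, h.choose j := h.choose_spec.2
      _ = ∑ j ∈ s, compFun T s j y := Finset.sum_congr rfl fun j _ => (e j).symm

theorem compFun_eq {T : Fin n → Submodule R M} {s : Finset (Fin n)} (hdis : HDis T s)
    {y : M} {c : Fin n → M} (hc : DecompOf T s y c) {j0 : Fin n} (hj0 : j0 ∈ s) :
    compFun T s j0 y = c j0 := by
  have hy : y ∈ s.sup T := by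
    rw [hc.2]
    exact Submodule.sum_mem _ fun j hj => Finset.le_sup (f := T) hj (hc.1 j)
  exact decomp_unique hdis (compFun_decomp hy) hc j0 hj0

theorem compFun_sum {T : Fin n → Submodule R M} {s : Finset (Fin n)} {y : M}
    (hy : y ∈ s.sup T) : ∑ j ∈ s, compFun T s j y = y := ((compFun_decomp hy).2).symm

theorem compFun_add {T : Fin n → Submodule R M} {s : Finset (Fin n)} (hdis : HDis T s)
    {y y' : M} (hy : y ∈ s.sup T) (hy' : y' ∈ s.sup T) {j0 : Fin n} (hj0 : j0 ∈ s) :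
    compFun T s j0 (y + y') = compFun T s j0 y + compFun T s j0 y' := by
  have hc := compFun_decomp hy
  have hc' := compFun_decomp hy'
  have hcc : DecompOf T s (y + y') (fun j => compFun T s j y + compFun T s j y') :=
    ⟨fun j => (T j).add_mem (hc.1 j) (hc'.1 j), by
      rw [Finset.sum_add_distrib, ← hc.2, ← hc'.2]⟩
  exact compFun_eq hdis hcc hj0

theorem compFun_smul {T : Fin n → Submodule R M} {s : Finset (Fin n)} (hdis : HDis T s)
    {y : M} (hy : y ∈ s.sup T) (r : R) {j0 : Fin n} (hj0 : j0 ∈ s) :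
    compFun T s j0 (r • y) = r • compFun T s j0 y := by
  have hc := compFun_decomp hy
  have hcc : DecompOf T s (r • y) (fun j => r • compFun T s j y) :=
    ⟨fun j => (T j).smul_mem r (hc.1 j), by rw [← Finset.smul_sum, ← hc.2]⟩
  exact compFun_eq hdis hcc hj0

end Aux3
section Aux4
variable {R : Type u} [CommRing R] {M : Type v} [AddCommGroup M] [Module R M] {n : ℕ}

/-- `y` is the `j0`-component of `x`, where `x` lies in the `w`-envelope of the
(direct) sum of the `T j`, `j ∈ s`. -/
def IsProjAt (T : Fin n → Submodule R M) (s : Finset (Fin n)) (j0 : Fin n) (x y : M) : Prop :=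
  y ∈ T j0 ∧ ∃ J : Ideal R, IsGVIdeal R J ∧ (∀ j ∈ J, j • x ∈ s.sup T) ∧
    ∀ j ∈ J, j • y = compFun T s j0 (j • x)

open scoped Classical in
noncomputable def projAt (T : Fin n → Submodule R M) (s : Finset (Fin n)) (j0 : Fin n)
    (x : M) : M :=
  if h : ∃ y, IsProjAt T s j0 x y then h.choose else 0

theorem proj_eval {T : Fin n → Submodule R M} {s : Finset (Fin n)} (hdis : HDis T s)
    {j0 : Fin n} (hj0 : j0 ∈ s) (tf : IsGVTorsionFree R M) {x y : M}
    (h : IsProjAt T s j0 x y) {j : R} (hjx : j • x ∈ s.sup T) :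
    j • y = compFun T s j0 (j • x) := by
  obtain ⟨hy, J, hJ, hJx, hJy⟩ := h
  refine tf_eq tf hJ fun j' hj' => ?_
  calc j' • (j • y) = j • (j' • y) := smul_comm _ _ _
    _ = j • compFun T s j0 (j' • x) := by rw [hJy j' hj']
    _ = compFun T s j0 (j • (j' • x)) := (compFun_smul hdis (hJx j' hj') j hj0).symm
    _ = compFun T s j0 (j' • (j • x)) := by rw [smul_comm]
    _ = j' • compFun T s j0 (j • x) := compFun_smul hdis hjx j' hj0

theorem proj_unique {T : Fin n → Submodule R M} {s : Finset (Fin n)} (hdis : HDis T s)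
    {j0 : Fin n} (hj0 : j0 ∈ s) (tf : IsGVTorsionFree R M) {x y y' : M}
    (h : IsProjAt T s j0 x y) (h' : IsProjAt T s j0 x y') : y = y' := by
  obtain ⟨hy, J, hJ, hJx, hJy⟩ := h
  refine tf_eq tf hJ fun j hj => ?_
  rw [hJy j hj, proj_eval hdis hj0 tf h' (hJx j hj)]

theorem projAt_spec (hM : IsWModule R M) {T : Fin n → Submodule R M} {s : Finset (Fin n)}
    (hdis : HDis T s) {j0 : Fin n} (hj0 : j0 ∈ s) (hwj0 : IsWSubmodule R (T j0)) {x : M}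
    (hx : x ∈ wEnv (s.sup T)) : IsProjAt T s j0 x (projAt T s j0 x) := by
  obtain ⟨J, hJ, hJx⟩ := hx
  set ℓ : J →ₗ[R] M :=
    { toFun := fun j => compFun T s j0 ((j : R) • x)
      map_add' := fun j j' => by
        show compFun T s j0 (((j : R) + (j' : R)) • x) = _
        rw [add_smul]
        exact compFun_add hdis (hJx j j.2) (hJx j' j'.2) hj0
      map_smul' := fun r j => by
        show compFun T s j0 ((r * (j : R)) • x) = r • compFun T s j0 ((j : R) • x)
        rw [mul_smul]
        exact compFun_smul hdis (hJx j j.2) r hj0 } with hℓ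
  obtain ⟨y, hy⟩ := w_ext hM hJ ℓ
  have hymem : y ∈ T j0 := hwj0 y ⟨J, hJ, fun j hj => by
    rw [hy ⟨j, hj⟩]; exact compFun_mem j0 _⟩
  have hP : IsProjAt T s j0 x y := ⟨hymem, J, hJ, hJx, fun j hj => hy ⟨j, hj⟩⟩
  unfold projAt
  rw [dif_pos ⟨y, hP⟩]
  exact Exists.choose_spec (⟨y, hP⟩ : ∃ y, IsProjAt T s j0 x y)

theorem projAt_mem (hM : IsWModule R M) {T : Fin n → Submodule R M} {s : Finset (Fin n)}
    (hdis : HDis T s) {j0 : Fin n} (hj0 : j0 ∈ s) (hwj0 : IsWSubmodule R (T j0)) {x : M}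
    (hx : x ∈ wEnv (s.sup T)) : projAt T s j0 x ∈ T j0 :=
  (projAt_spec hM hdis hj0 hwj0 hx).1

theorem projAt_add (hM : IsWModule R M) (tf : IsGVTorsionFree R M)
    {T : Fin n → Submodule R M} {s : Finset (Fin n)} (hdis : HDis T s) {j0 : Fin n}
    (hj0 : j0 ∈ s) (hwj0 : IsWSubmodule R (T j0)) {x x' : M}
    (hx : x ∈ wEnv (s.sup T)) (hx' : x' ∈ wEnv (s.sup T)) :
    projAt T s j0 (x + x') = projAt T s j0 x + projAt T s j0 x' := by
  have p := projAt_spec hM hdis hj0 hwj0 hx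
  have p' := projAt_spec hM hdis hj0 hwj0 hx'
  have pp := projAt_spec hM hdis hj0 hwj0 ((wEnv (s.sup T)).add_mem hx hx')
  refine proj_unique hdis hj0 tf pp ?_
  obtain ⟨hy, J, hJ, hJx, -⟩ := id p
  obtain ⟨hy', J', hJ', hJx', -⟩ := id p'
  refine ⟨(T j0).add_mem hy hy', J * J', gv_mul hJ hJ', fun j hj => ?_, fun j hj => ?_⟩
  · rw [smul_add]
    exact (s.sup T).add_mem (hJx j (Ideal.mul_le_left hj)) (hJx' j (Ideal.mul_le_right hj))
  · have m1 : j • x ∈ s.sup T := hJx j (Ideal.mul_le_left hj)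
    have m2 : j • x' ∈ s.sup T := hJx' j (Ideal.mul_le_right hj)
    calc j • (projAt T s j0 x + projAt T s j0 x')
        = j • projAt T s j0 x + j • projAt T s j0 x' := smul_add _ _ _
      _ = compFun T s j0 (j • x) + compFun T s j0 (j • x') := by
          rw [proj_eval hdis hj0 tf p m1, proj_eval hdis hj0 tf p' m2]
      _ = compFun T s j0 (j • x + j • x') := (compFun_add hdis m1 m2 hj0).symm
      _ = compFun T s j0 (j • (x + x')) := by rw [← smul_add]

theorem projAt_smul (hM : IsWModule R M) (tf : IsGVTorsionFree R M)
    {T : Fin n → Submodule R M} {s : Finset (Fin n)} (hdis : HDis T s) {j0 : Fin n}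
    (hj0 : j0 ∈ s) (hwj0 : IsWSubmodule R (T j0)) {x : M} (r : R)
    (hx : x ∈ wEnv (s.sup T)) :
    projAt T s j0 (r • x) = r • projAt T s j0 x := by
  have p := projAt_spec hM hdis hj0 hwj0 hx
  have pp := projAt_spec hM hdis hj0 hwj0 ((wEnv (s.sup T)).smul_mem r hx)
  refine proj_unique hdis hj0 tf pp ?_
  obtain ⟨hy, J, hJ, hJx, -⟩ := id p
  refine ⟨(T j0).smul_mem r hy, J, hJ, fun j hj => ?_, fun j hj => ?_⟩
  · rw [smul_comm]
    exact (s.sup T).smul_mem r (hJx j hj)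
  · have m1 : j • x ∈ s.sup T := hJx j hj
    calc j • (r • projAt T s j0 x) = r • (j • projAt T s j0 x) := smul_comm _ _ _
      _ = r • compFun T s j0 (j • x) := by rw [proj_eval hdis hj0 tf p m1]
      _ = compFun T s j0 (r • (j • x)) := (compFun_smul hdis m1 r hj0).symm
      _ = compFun T s j0 (j • (r • x)) := by rw [smul_comm]

theorem projAt_sum (hM : IsWModule R M) (tf : IsGVTorsionFree R M)
    {T : Fin n → Submodule R M} {s : Finset (Fin n)} (hdis : HDis T s)
    (hw : ∀ j0 ∈ s, IsWSubmodule R (T j0)) {x : M} (hx : x ∈ wEnv (s.sup T)) :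
    ∑ j0 ∈ s, projAt T s j0 x = x := by
  obtain ⟨J, hJ, hJx⟩ := hx
  refine tf_eq tf hJ fun j hj => ?_
  rw [Finset.smul_sum]
  have he : ∀ j0 ∈ s, j • projAt T s j0 x = compFun T s j0 (j • x) := fun j0 hj0 =>
    proj_eval hdis hj0 tf (projAt_spec hM hdis hj0 (hw j0 hj0) ⟨J, hJ, hJx⟩) (hJx j hj)
  rw [Finset.sum_congr rfl he]
  exact compFun_sum (hJx j hj)

end Aux4
section Main
variable {R : Type u} [CommRing R] {M : Type v} [AddCommGroup M] [Module R M]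

theorem main_aux (hM : IsWModule R M) {n : ℕ} (T : Fin n → Submodule R M)
    (hsimple : ∀ i, IsWSimpleSubmodule R (T i))
    (hnoniso : ∀ i j, i ≠ j → IsEmpty (↥(T i) ≃ₗ[R] ↥(T j))) :
    ∀ k : ℕ, ∀ i : Fin n, ∀ s : Finset (Fin n), s.card ≤ k → i ∉ s →
      ∀ x, x ∈ T i → x ∈ s.sup T → x = 0 := by
  intro k
  induction k with
  | zero =>
    intro i s hcard his x hxi hxs
    have hs : s = ∅ := Finset.card_eq_zero.mp (Nat.le_zero.mp hcard)
    subst hs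
    rw [Finset.sup_empty, Submodule.mem_bot] at hxs
    exact hxs
  | succ k IH =>
    intro i s hcard his x hxi hxs
    by_contra hx0
    have tf : IsGVTorsionFree R M := hM.1
    have hdis : HDis T s := fun j0 hj0 y hy1 hy2 =>
      IH j0 (s.erase j0) (by rw [Finset.card_erase_of_mem hj0]; omega)
        (Finset.notMem_erase _ _) y hy1 hy2
    have hw : ∀ j0 ∈ s, IsWSubmodule R (T j0) := fun j0 _ => (hsimple j0).1
    -- `T i` is contained in the w-envelope of the sum
    have hTi : T i ≤ wEnv (s.sup T) := by
      have hcl : ∀ z ∈ T i,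
          (∃ J : Ideal R, IsGVIdeal R J ∧ ∀ j ∈ J, j • z ∈ T i ⊓ wEnv (s.sup T)) →
            z ∈ T i ⊓ wEnv (s.sup T) := by
        rintro z hzT ⟨J, hJ, hJz⟩
        exact Submodule.mem_inf.mpr
          ⟨hzT, wEnv_closed hJ fun j hj => (Submodule.mem_inf.mp (hJz j hj)).2⟩
      rcases (hsimple i).2.2 (T i ⊓ wEnv (s.sup T)) inf_le_left hcl with h | h
      · exfalso
        have hxK : x ∈ T i ⊓ wEnv (s.sup T) := Submodule.mem_inf.mpr ⟨hxi, le_wEnv hxs⟩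
        rw [h, Submodule.mem_bot] at hxK
        exact hx0 hxK
      · intro z hz
        rw [← h] at hz
        exact (Submodule.mem_inf.mp hz).2
    have hxw : x ∈ wEnv (s.sup T) := hTi hxi
    have hsum := projAt_sum hM tf hdis hw hxw
    have hex : ∃ j0 ∈ s, projAt T s j0 x ≠ 0 := by
      by_contra hcon
      push_neg at hcon
      exact hx0 (by rw [← hsum]; exact Finset.sum_eq_zero hcon)
    obtain ⟨j0, hj0, hpx⟩ := hex
    have hij0 : i ≠ j0 := fun h => his (h ▸ hj0)
    have hwj0 : IsWSubmodule R (T j0) := (hsimple j0).1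
    have hc0 : compFun T s j0 (0 : M) = 0 :=
      compFun_eq hdis ⟨fun j => (T j).zero_mem, by simp⟩ hj0
    have hz0 : projAt T s j0 (0 : M) = 0 := by
      refine proj_unique hdis hj0 tf
        (projAt_spec hM hdis hj0 hwj0 (wEnv (s.sup T)).zero_mem) ?_
      exact ⟨(T j0).zero_mem, ⊤, gv_top, fun j _ => by simpa using (s.sup T).zero_mem,
        fun j _ => by rw [smul_zero, hc0]⟩
    -- injectivity of the projection on `T i`
    set K2 : Submodule R M :=
      { carrier := {z | z ∈ T i ∧ projAt T s j0 z = 0}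
        zero_mem' := ⟨(T i).zero_mem, hz0⟩
        add_mem' := fun {a b} ha hb => ⟨(T i).add_mem ha.1 hb.1, by
          rw [projAt_add hM tf hdis hj0 hwj0 (hTi ha.1) (hTi hb.1), ha.2, hb.2, add_zero]⟩
        smul_mem' := fun r a ha => ⟨(T i).smul_mem r ha.1, by
          rw [projAt_smul hM tf hdis hj0 hwj0 r (hTi ha.1), ha.2, smul_zero]⟩ } with hK2
    have memK2 : ∀ w : M, w ∈ K2 ↔ (w ∈ T i ∧ projAt T s j0 w = 0) := fun w => Iff.rfl
    have hker : ∀ z, z ∈ T i → projAt T s j0 z = 0 → z = 0 := by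
      have hcl : ∀ z ∈ T i, (∃ J : Ideal R, IsGVIdeal R J ∧ ∀ j ∈ J, j • z ∈ K2) →
          z ∈ K2 := by
        rintro z hzT ⟨J, hJ, hJz⟩
        refine (memK2 z).mpr ⟨hzT, tf _ ⟨J, hJ, fun j hj => ?_⟩⟩
        rw [← projAt_smul hM tf hdis hj0 hwj0 j (hTi hzT)]
        exact ((memK2 _).mp (hJz j hj)).2
      rcases (hsimple i).2.2 K2 (fun z hz => ((memK2 z).mp hz).1) hcl with h | h
      · intro z hz hz0'
        have hzm : z ∈ K2 := (memK2 z).mpr ⟨hz, hz0'⟩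
        rw [h, Submodule.mem_bot] at hzm
        exact hzm
      · exfalso
        have hx2 : x ∈ K2 := by rw [h]; exact hxi
        exact hpx ((memK2 x).mp hx2).2
    have hinj : ∀ z z', z ∈ T i → z' ∈ T i →
        projAt T s j0 z = projAt T s j0 z' → z = z' := by
      intro z z' hz hz' he
      have hsub : projAt T s j0 (z - z') = 0 := by
        have e1 : z - z' = z + (-1 : R) • z' := by rw [neg_one_smul]; abel
        rw [e1, projAt_add hM tf hdis hj0 hwj0 (hTi hz) (hTi ((T i).smul_mem (-1) hz')),
          projAt_smul hM tf hdis hj0 hwj0 (-1) (hTi hz'), he, neg_one_smul]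
        simp
      exact sub_eq_zero.mp (hker _ (Submodule.sub_mem _ hz hz') hsub)
    -- the range of the projection and its density in `T j0`
    set Rng : Submodule R M :=
      { carrier := {w | ∃ z, z ∈ T i ∧ projAt T s j0 z = w}
        zero_mem' := ⟨0, (T i).zero_mem, hz0⟩
        add_mem' := fun {a b} ha hb => by
          obtain ⟨z, hz, hza⟩ := ha
          obtain ⟨z', hz', hzb⟩ := hb
          exact ⟨z + z', (T i).add_mem hz hz', by
            rw [projAt_add hM tf hdis hj0 hwj0 (hTi hz) (hTi hz'), hza, hzb]⟩
        smul_mem' := fun r a ha => by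
          obtain ⟨z, hz, hza⟩ := ha
          exact ⟨r • z, (T i).smul_mem r hz, by
            rw [projAt_smul hM tf hdis hj0 hwj0 r (hTi hz), hza]⟩ } with hRng
    have memRng : ∀ w : M, w ∈ Rng ↔ ∃ z, z ∈ T i ∧ projAt T s j0 z = w := fun w => Iff.rfl
    have hTj0 : T j0 ≤ wEnv Rng := by
      have hcl : ∀ z ∈ T j0,
          (∃ J : Ideal R, IsGVIdeal R J ∧ ∀ j ∈ J, j • z ∈ T j0 ⊓ wEnv Rng) →
            z ∈ T j0 ⊓ wEnv Rng := by
        rintro z hzT ⟨J, hJ, hJz⟩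
        exact Submodule.mem_inf.mpr
          ⟨hzT, wEnv_closed hJ fun j hj => (Submodule.mem_inf.mp (hJz j hj)).2⟩
      rcases (hsimple j0).2.2 (T j0 ⊓ wEnv Rng) inf_le_left hcl with h | h
      · exfalso
        have hpK : projAt T s j0 x ∈ T j0 ⊓ wEnv Rng :=
          Submodule.mem_inf.mpr ⟨projAt_mem hM hdis hj0 hwj0 hxw,
            le_wEnv ((memRng _).mpr ⟨x, hxi, rfl⟩)⟩
        rw [h, Submodule.mem_bot] at hpK
        exact hpx hpK
      · intro z hz
        rw [← h] at hz
        exact (Submodule.mem_inf.mp hz).2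
    -- surjectivity onto `T j0`
    have hsurj : ∀ y, y ∈ T j0 → ∃ z, z ∈ T i ∧ projAt T s j0 z = y := by
      intro y hy
      obtain ⟨J, hJ, hJy⟩ := hTj0 hy
      choose pre hpre1 hpre2 using
        fun j : J => (memRng _).mp (hJy (j : R) j.2)
      set L : J →ₗ[R] M :=
        { toFun := pre
          map_add' := fun a b => by
            refine hinj _ _ (hpre1 (a + b)) ((T i).add_mem (hpre1 a) (hpre1 b)) ?_
            rw [hpre2 (a + b),
              projAt_add hM tf hdis hj0 hwj0 (hTi (hpre1 a)) (hTi (hpre1 b)),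
              hpre2 a, hpre2 b, Submodule.coe_add, add_smul]
          map_smul' := fun r a => by
            show pre (r • a) = r • pre a
            refine hinj _ _ (hpre1 (r • a)) ((T i).smul_mem r (hpre1 a)) ?_
            rw [hpre2 (r • a), projAt_smul hM tf hdis hj0 hwj0 r (hTi (hpre1 a)),
              hpre2 a, Submodule.coe_smul, smul_eq_mul, mul_smul] } with hL
      obtain ⟨z, hz⟩ := w_ext hM hJ L
      have hzTi : z ∈ T i := (hsimple i).1 z
        ⟨J, hJ, fun j hj => by
          have e : j • z = pre ⟨j, hj⟩ := hz ⟨j, hj⟩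
          rw [e]; exact hpre1 ⟨j, hj⟩⟩
      refine ⟨z, hzTi, ?_⟩
      refine tf_eq tf hJ fun j hj => ?_
      have e : j • z = pre ⟨j, hj⟩ := hz ⟨j, hj⟩
      rw [← projAt_smul hM tf hdis hj0 hwj0 j (hTi hzTi), e, hpre2 ⟨j, hj⟩]
    -- assemble the isomorphism and contradict non-isomorphy
    set F : ↥(T i) →ₗ[R] M :=
      { toFun := fun z => projAt T s j0 (z : M)
        map_add' := fun z z' => by
          show projAt T s j0 ((z : M) + (z' : M)) = _
          exact projAt_add hM tf hdis hj0 hwj0 (hTi z.2) (hTi z'.2)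
        map_smul' := fun r z => by
          show projAt T s j0 (r • (z : M)) = r • projAt T s j0 (z : M)
          exact projAt_smul hM tf hdis hj0 hwj0 r (hTi z.2) } with hF
    have hmemF : ∀ z : ↥(T i), F z ∈ T j0 := fun z => projAt_mem hM hdis hj0 hwj0 (hTi z.2)
    set F' : ↥(T i) →ₗ[R] ↥(T j0) := F.codRestrict (T j0) hmemF with hF'
    have hbij : Function.Bijective F' := by
      constructor
      · intro z z' he
        have hv : F z = F z' := congrArg Subtype.val he
        exact Subtype.ext (hinj _ _ z.2 z'.2 hv)
      · intro y
        obtain ⟨z, hzTi, hzy⟩ := hsurj y y.2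
        exact ⟨⟨z, hzTi⟩, Subtype.ext hzy⟩
    exact (hnoniso i j0 hij0).false (LinearEquiv.ofBijective F' hbij)

end Main

/-- Pairwise non-isomorphic w-simple submodules `M_1, …, M_n` of a
w-module `M` form an independent family: their sum is direct. -/
theorem wSimple_pairwise_nonIso_independent (R : Type u) [CommRing R] (M : Type u)
    [AddCommGroup M] [Module R M] (hM : IsWModule R M) (n : ℕ)
    (T : Fin n → Submodule R M) (hsimple : ∀ i, IsWSimpleSubmodule R (T i))
    (hnoniso : ∀ i j, i ≠ j → IsEmpty (T i ≃ₗ[R] T j)) :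
    iSupIndep T := by
  intro i
  rw [Submodule.disjoint_def]
  intro x hxi hxs
  have hle : (⨆ j, ⨆ (_ : j ≠ i), T j) ≤ (Finset.univ.erase i).sup T := by
    refine iSup_le fun j => iSup_le fun hj => ?_
    exact Finset.le_sup (f := T) (Finset.mem_erase.mpr ⟨hj, Finset.mem_univ j⟩)
  exact main_aux hM T hsimple hnoniso (Finset.univ.erase i).card i (Finset.univ.erase i)
    le_rfl (Finset.notMem_erase i _) x hxi (hle hxs)
end

section
/- Let R be a w-Noetherian commutative ring and let E be a GV-torsion-free injective R-module (i.e., a w-injective w-module). Then E is w-faithfully injective (equivalently, Hom_R(R/m, E) ≠ 0 for every m ∈ w-Max(R)) if and only if for every m ∈ w-Max(R) the localization E_m is a faithfully injective R_m-module, i.e., E_m is an injective R_m-module and Hom_{R_m}(N, E_m) ≠ 0 for every nonzero R_m-module N. -/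
universe u v

/-- `R` is w-Noetherian: every ascending chain of w-ideals of `R` stabilizes. -/
def IsWNoetherianRing (R : Type u) [CommRing R] : Prop :=
  ∀ f : ℕ →o Ideal R, (∀ n, IsWIdeal R (f n)) → ∃ n, ∀ k, n ≤ k → f k = f n


section Aux

variable {R : Type u} [CommRing R]

/-- Every nonempty family of w-ideals has a maximal element. -/
lemma IsWNoetherianRing.exists_maximal (hRN : IsWNoetherianRing R)
    (𝒮 : Set (Ideal R)) (hW : ∀ I ∈ 𝒮, IsWIdeal R I) (hne : 𝒮.Nonempty) :
    ∃ I ∈ 𝒮, ∀ J ∈ 𝒮, I ≤ J → J = I := by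
  by_contra hcon
  push_neg at hcon
  have step : ∀ I : {I // I ∈ 𝒮}, ∃ J : {I // I ∈ 𝒮}, I.1 ≤ J.1 ∧ J.1 ≠ I.1 := by
    rintro ⟨I, hI⟩
    obtain ⟨J, hJ, h1, h2⟩ := hcon I hI
    exact ⟨⟨J, hJ⟩, h1, h2⟩
  choose next hnext1 hnext2 using step
  obtain ⟨I0, hI0⟩ := hne
  let g : ℕ → {I // I ∈ 𝒮} := fun n => Nat.rec ⟨I0, hI0⟩ (fun _ I => next I) n
  have hmono : ∀ n, (g n).1 ≤ (g (n+1)).1 := fun n => hnext1 _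
  let f : ℕ →o Ideal R := ⟨fun n => (g n).1, monotone_nat_of_le_succ hmono⟩
  obtain ⟨n, hn⟩ := hRN f (fun n => hW _ (g n).2)
  exact hnext2 (g n) (hn (n+1) (Nat.le_succ n))

variable {E : Type u} [AddCommGroup E] [Module R E]

lemma isWIdeal_torsionOf (htf : IsGVTorsionFree R E) (x : E) :
    IsWIdeal R (Ideal.torsionOf R E x) := by
  rintro r ⟨J, hJ, h⟩
  rw [Ideal.mem_torsionOf_iff]
  refine htf (r • x) ⟨J, hJ, fun j hj => ?_⟩
  rw [smul_smul]
  exact (Ideal.mem_torsionOf_iff x (j * r)).mp (h j hj)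

/-- Stabilization: some `u₀ ∈ S` makes the torsion of `u₀ • x` stable under `S`. -/
lemma exists_stable (hRN : IsWNoetherianRing R) (htf : IsGVTorsionFree R E)
    (S : Submonoid R) (x : E) :
    ∃ u₀ ∈ S, ∀ u ∈ S, ∀ r : R, (u * r) • (u₀ • x) = 0 → r • (u₀ • x) = 0 := by
  obtain ⟨I, hImem, hImax⟩ := hRN.exists_maximal
    {I | ∃ u ∈ S, Ideal.torsionOf R E (u • x) = I}
    (by rintro I ⟨u, hu, rfl⟩; exact isWIdeal_torsionOf htf _)
    ⟨Ideal.torsionOf R E ((1:R) • x), 1, S.one_mem, rfl⟩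
  obtain ⟨u₀, hu₀, hI⟩ := hImem
  refine ⟨u₀, hu₀, fun u hu r hr => ?_⟩
  have hle : Ideal.torsionOf R E (u₀ • x) ≤ Ideal.torsionOf R E ((u * u₀) • x) := by
    intro a ha
    rw [Ideal.mem_torsionOf_iff] at ha ⊢
    rw [show (u * u₀) • x = u • (u₀ • x) by rw [smul_smul]]
    rw [smul_comm]
    rw [ha, smul_zero]
  have heq : Ideal.torsionOf R E ((u * u₀) • x) = Ideal.torsionOf R E (u₀ • x) := by
    rw [hI] at hle ⊢
    exact hImax _ ⟨u * u₀, S.mul_mem hu hu₀, rfl⟩ hle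
  have hr0 : r • ((u * u₀) • x) = 0 := by
    have h : r • ((u * u₀) • x) = (u * r) • (u₀ • x) := by
      rw [smul_smul, smul_smul]; congr 1; ring
    rw [h, hr]
  have hr' : r ∈ Ideal.torsionOf R E ((u * u₀) • x) :=
    (Ideal.mem_torsionOf_iff _ _).mpr hr0
  rw [heq, Ideal.mem_torsionOf_iff] at hr'
  exact hr'

/-- Division by `a` in an injective module, given the compatibility condition. -/
lemma exists_div (hinj : Module.Injective R E) (a : R) (w : E)
    (h0 : ∀ r : R, r * a = 0 → r • w = 0) : ∃ y : E, a • y = w := by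
  have hmem : ∀ v : Ideal.span {a}, ∃ r : R, r * a = (v : R) := fun v => by
    have h := v.2
    rw [Ideal.mem_span_singleton'] at h
    exact h
  choose co hco using hmem
  have key : ∀ (v : (Ideal.span {a} : Ideal R)) (r : R), r * a = (v : R) → r • w = co v • w := by
    intro v r hr
    have h1 : (r - co v) * a = 0 := by rw [sub_mul, hr, hco, sub_self]
    have h2 := h0 _ h1
    rw [sub_smul, sub_eq_zero] at h2
    exact h2
  let g : (Ideal.span {a} : Ideal R) →ₗ[R] E :=
    { toFun := fun v => co v • w
      map_add' := by
        intro v1 v2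
        show co (v1 + v2) • w = co v1 • w + co v2 • w
        rw [← key (v1 + v2) (co v1 + co v2)
          (by rw [add_mul, hco, hco]; rfl), add_smul]
      map_smul' := by
        intro r v
        simp only [RingHom.id_apply]
        show co (r • v) • w = r • (co v • w)
        rw [← key (r • v) (r * co v)
          (by rw [mul_assoc, hco]; simp [smul_eq_mul]), mul_smul] }
  obtain ⟨G, hG⟩ := hinj.out (Ideal.span {a}).subtype (Submodule.injective_subtype _) g
  refine ⟨G 1, ?_⟩
  have h1 : a • G 1 = G a := by rw [← map_smul, smul_eq_mul, mul_one]
  have h2 : G a = g ⟨a, Ideal.mem_span_singleton_self a⟩ :=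
    hG ⟨a, Ideal.mem_span_singleton_self a⟩
  have h3 : (1 : R) • w = co ⟨a, Ideal.mem_span_singleton_self a⟩ • w :=
    key ⟨a, Ideal.mem_span_singleton_self a⟩ 1 (one_mul a)
  rw [h1, h2]
  show co ⟨a, Ideal.mem_span_singleton_self a⟩ • w = w
  rw [← h3, one_smul]

end Aux

section Localized

variable {R : Type u} [CommRing R] {E : Type u} [AddCommGroup E] [Module R E]
variable (S : Submonoid R)

lemma mem_kerMk_iff (x : E) :
    x ∈ LinearMap.ker (LocalizedModule.mkLinearMap S E) ↔ ∃ u : S, u • x = 0 := by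
  rw [LinearMap.mem_ker, LocalizedModule.mkLinearMap_apply,
    show (0 : LocalizedModule S E) = LocalizedModule.mk 0 1 from (LocalizedModule.zero_mk 1).symm,
    LocalizedModule.mk_eq]
  constructor
  · rintro ⟨u, hu⟩; exact ⟨u, by simpa using hu⟩
  · rintro ⟨u, hu⟩; exact ⟨u, by simpa using hu⟩

variable {S}

lemma mk_one_surjective (hRN : IsWNoetherianRing R) (htf : IsGVTorsionFree R E)
    (hinj : Module.Injective R E) (ξ : LocalizedModule S E) :
    ∃ y : E, (LocalizedModule.mkLinearMap S E) y = ξ := by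
  induction ξ using LocalizedModule.induction_on with
  | h x s =>
    obtain ⟨u₀, hu₀, hstab⟩ := exists_stable hRN htf S x
    have h0 : ∀ r : R, r * ((s : R) * u₀) = 0 → r • (u₀ • x) = 0 := by
      intro r hr
      refine hstab (s : R) s.2 r ?_
      have h : ((s : R) * r) • (u₀ • x) = (r * ((s : R) * u₀)) • x := by
        rw [smul_smul]; congr 1; ring
      rw [h, hr, zero_smul]
    obtain ⟨y, hy⟩ := exists_div hinj ((s : R) * u₀) (u₀ • x) h0
    refine ⟨y, ?_⟩
    rw [LocalizedModule.mkLinearMap_apply, LocalizedModule.mk_eq]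
    refine ⟨⟨u₀, hu₀⟩, ?_⟩
    simp only [Submonoid.smul_def, Submonoid.coe_one, one_smul, smul_smul]
    rw [show u₀ * (s : R) = (s : R) * u₀ from mul_comm _ _, hy]

/-- The projection onto the `S`-torsion part. -/
lemma exists_torsion_proj (hRN : IsWNoetherianRing R) (htf : IsGVTorsionFree R E)
    (hinj : Module.Injective R E) :
    ∃ τ : E →ₗ[R] E,
      (∀ z ∈ LinearMap.ker (LocalizedModule.mkLinearMap S E), τ z = z) ∧
      (∀ x : E, τ x ∈ LinearMap.ker (LocalizedModule.mkLinearMap S E)) := by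
  set Z := LinearMap.ker (LocalizedModule.mkLinearMap S E) with hZdef
  obtain ⟨C, hCmem, hCmax⟩ : ∃ C, Maximal (· ∈ {C : Submodule R E | Disjoint C Z}) C := by
    apply zorn_le₀
    intro c hcsub hchain
    rcases Set.eq_empty_or_nonempty c with rfl | hcne
    · exact ⟨⊥, disjoint_bot_left, by simp⟩
    · refine ⟨sSup c, ?_, fun z hz => le_sSup hz⟩
      rw [Set.mem_setOf_eq, Submodule.disjoint_def]
      intro x hx hxZ
      obtain ⟨p, hp, hxp⟩ :=
        (Submodule.mem_sSup_of_directed hcne (hchain.directedOn)).mp hx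
      exact Submodule.disjoint_def.mp (hcsub hp) x hxp hxZ
  have hdisj : Disjoint C Z := hCmem
  have hinj2 : Function.Injective ((C.mkQ).comp Z.subtype) := by
    intro z1 z2 h
    have hsub : ((z1 : E) - z2) ∈ C := by
      rw [← Submodule.Quotient.eq]
      exact h
    have : ((z1 : E) - (z2 : E)) = 0 :=
      Submodule.disjoint_def.mp hdisj _ hsub (Z.sub_mem z1.2 z2.2)
    exact Subtype.ext (by rw [← sub_eq_zero]; exact this)
  obtain ⟨σ, hσ⟩ := hinj.out ((C.mkQ).comp Z.subtype) hinj2 Z.subtype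
  set τ : E →ₗ[R] E := σ.comp C.mkQ with hτdef
  have hτZ : ∀ z ∈ Z, τ z = z := by
    intro z hz
    exact hσ ⟨z, hz⟩
  have hτC : ∀ c ∈ C, τ c = 0 := by
    intro c hc
    show σ (C.mkQ c) = 0
    rw [show C.mkQ c = 0 from (Submodule.Quotient.mk_eq_zero C).mpr hc, map_zero]
  refine ⟨τ, hτZ, ?_⟩
  intro x
  obtain ⟨u₀, hu₀, hstab⟩ := exists_stable hRN htf S (τ x)
  rw [hZdef, mem_kerMk_iff]
  refine ⟨⟨u₀, hu₀⟩, ?_⟩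
  show u₀ • τ x = 0
  by_contra hne
  have h1 : u₀ • x ∉ C := by
    intro hc
    exact hne (by rw [← map_smul]; exact hτC _ hc)
  have h2 : ¬ Disjoint (C ⊔ Submodule.span R {u₀ • x}) Z := by
    intro hd
    exact h1 (hCmax hd le_sup_left (Submodule.mem_sup_right (Submodule.mem_span_singleton_self _)))
  rw [Submodule.disjoint_def] at h2
  push_neg at h2
  obtain ⟨z, hzCS, hzZ, hzne⟩ := h2
  obtain ⟨cc, hcc, yy, hyy, rfl⟩ := Submodule.mem_sup.mp hzCS
  obtain ⟨r, rfl⟩ := Submodule.mem_span_singleton.mp hyy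
  have heq : cc + r • u₀ • x = r • u₀ • τ x := by
    have h3 := hτZ _ hzZ
    rw [map_add, map_smul, map_smul, hτC _ hcc, zero_add] at h3
    exact h3.symm
  obtain ⟨v, hv⟩ := (mem_kerMk_iff S _).mp hzZ
  have h4 : ((v : R) * r) • (u₀ • τ x) = 0 := by
    have h5 : ((v : R) * r) • (u₀ • τ x) = (v : R) • (cc + r • u₀ • x) := by
      rw [heq]
      simp only [smul_smul]
      congr 1
      ring
    rw [h5, ← Submonoid.smul_def]
    exact hv
  have h6 := hstab (v : R) v.2 r h4
  rw [← heq] at h6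
  exact hzne h6
end Localized

section InjLoc

variable {R : Type u} [CommRing R] {E : Type u} [AddCommGroup E] [Module R E]
variable (S : Submonoid R)

lemma injective_R_localizedModule (hRN : IsWNoetherianRing R) (htf : IsGVTorsionFree R E)
    (hinj : Module.Injective R E) : Module.Injective R (LocalizedModule S E) := by
  obtain ⟨τ, hτZ, hτmem⟩ := exists_torsion_proj (S := S) hRN htf hinj
  set c := LocalizedModule.mkLinearMap S E with hc
  set Q := LinearMap.ker τ with hQ
  have hττ : ∀ x, τ (τ x) = τ x := fun x => hτZ _ (hτmem x)
  have hbij : Function.Bijective (c.comp Q.subtype) := by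
    constructor
    · intro q1 q2 h
      have hz : ((q1 : E) - q2) ∈ LinearMap.ker c := by
        rw [LinearMap.mem_ker, map_sub]
        rw [sub_eq_zero]
        exact h
      have h2 := hτZ _ hz
      rw [map_sub] at h2
      have hq1 : τ (q1 : E) = 0 := q1.2
      have hq2 : τ (q2 : E) = 0 := q2.2
      rw [hq1, hq2, sub_zero] at h2
      exact Subtype.ext (by rw [← sub_eq_zero]; exact h2.symm)
    · intro ξ
      obtain ⟨y, hy⟩ := mk_one_surjective hRN htf hinj ξ
      refine ⟨⟨y - τ y, ?_⟩, ?_⟩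
      · show τ (y - τ y) = 0
        rw [map_sub, hττ, sub_self]
      · show c (y - τ y) = ξ
        rw [map_sub, show c (τ y) = 0 from hτmem y, sub_zero, hy]
  let e := LinearEquiv.ofBijective (c.comp Q.subtype) hbij
  constructor
  intro X Y _ _ _ _ f hf g
  obtain ⟨G, hG⟩ := hinj.out f hf ((Q.subtype).comp (e.symm.toLinearMap.comp g))
  refine ⟨c.comp ((LinearMap.id - τ).comp G), fun x => ?_⟩
  have h1 : G (f x) = ((e.symm (g x) : Q) : E) := hG x
  simp only [LinearMap.comp_apply, LinearMap.sub_apply, LinearMap.id_apply]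
  rw [h1]
  have h2 : τ ((e.symm (g x) : Q) : E) = 0 := (e.symm (g x)).2
  rw [h2, sub_zero]
  have h3 : c ((e.symm (g x) : Q) : E) = e (e.symm (g x)) := rfl
  rw [h3, e.apply_symm_apply]

lemma injective_Loc_localizedModule (hRN : IsWNoetherianRing R) (htf : IsGVTorsionFree R E)
    (hinj : Module.Injective R E) :
    Module.Injective (Localization S) (LocalizedModule S E) := by
  have hR := injective_R_localizedModule S hRN htf hinj
  constructor
  intro X Y iX iY mX mY f hf g
  letI : Module R X := Module.compHom X (algebraMap R (Localization S))
  letI : Module R Y := Module.compHom Y (algebraMap R (Localization S))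
  haveI : IsScalarTower R (Localization S) X :=
    IsScalarTower.of_algebraMap_smul (fun r x => rfl)
  haveI : IsScalarTower R (Localization S) Y :=
    IsScalarTower.of_algebraMap_smul (fun r x => rfl)
  obtain ⟨h, hh⟩ := hR.out (f.restrictScalars R) hf (g.restrictScalars R)
  exact ⟨h.extendScalarsOfIsLocalization S (Localization S), hh⟩

end InjLoc

section MaxW

variable {R : Type u} [CommRing R]

lemma isMaxWIdeal_isPrime {m : Ideal R} (hm : IsMaxWIdeal R m) : m.IsPrime := by
  refine ⟨hm.2.1, ?_⟩
  intro a b hab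
  by_contra hcon
  push_neg at hcon
  obtain ⟨ha, hb⟩ := hcon
  set I := m.colon (Ideal.span {a}) with hIdef
  have hw : IsWIdeal R I := by
    rintro x ⟨J, hJ, h⟩
    rw [hIdef, Ideal.mem_colon_span_singleton]
    refine hm.1 (x * a) ⟨J, hJ, fun j hj => ?_⟩
    have h2 := h j hj
    rw [Ideal.mem_colon_span_singleton] at h2
    rw [← mul_assoc]
    exact h2
  have hne : I ≠ ⊤ := by
    intro h
    apply ha
    have h1 : (1:R) ∈ I := h ▸ Submodule.mem_top
    rw [hIdef, Ideal.mem_colon_span_singleton, one_mul] at h1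
    exact h1
  have hle : m ≤ I := by
    intro r hr
    rw [hIdef, Ideal.mem_colon_span_singleton]
    exact Ideal.mul_mem_right a m hr
  have hEq := hm.2.2 I hw hne hle
  apply hb
  have hbI : b ∈ I := by
    rw [hIdef, Ideal.mem_colon_span_singleton, mul_comm]
    exact hab
  rw [← hEq]
  exact hbI

end MaxW

lemma LocalizedModule.exists_rep {R : Type u} [CommRing R] {E : Type u} [AddCommGroup E]
    [Module R E] {S : Submonoid R} (ξ : LocalizedModule S E) :
    ∃ (e : E) (s : S), ξ = LocalizedModule.mk e s := by
  induction ξ using LocalizedModule.induction_on with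
  | h e s => exact ⟨e, s, rfl⟩


/-- w-analogue of Ishikawa's Proposition 3.5: over a w-Noetherian ring,
a GV-torsion-free injective module `E` is w-faithfully injective iff for every maximal
w-ideal `m` the localization `E_m` is a faithfully injective `R_m`-module. -/
theorem wFaithfullyInjective_iff_localizations_faithfullyInjective (R : Type u)
    [CommRing R] (hRN : IsWNoetherianRing R) (E : Type u) [AddCommGroup E] [Module R E]
    (htf : IsGVTorsionFree R E) (hinj : Module.Injective R E) :
    (∀ m : Ideal R, IsMaxWIdeal R m → ∃ f : (R ⧸ m) →ₗ[R] E, f ≠ 0) ↔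
      ∀ (m : Ideal R), IsMaxWIdeal R m → ∀ [hp : m.IsPrime],
        Module.Injective (Localization.AtPrime m) (LocalizedModule m.primeCompl E) ∧
          ∀ (N : Type u) [AddCommGroup N] [Module (Localization.AtPrime m) N],
            Nontrivial N →
              ∃ f : N →ₗ[Localization.AtPrime m] LocalizedModule m.primeCompl E,
                f ≠ 0 := by
  constructor
  · intro hw m hm hp
    have hinjLoc : Module.Injective (Localization.AtPrime m) (LocalizedModule m.primeCompl E) :=
      injective_Loc_localizedModule m.primeCompl hRN htf hinj
    refine ⟨hinjLoc, ?_⟩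
    intro N _ _ hN
    obtain ⟨f, hf⟩ := hw m hm
    set x := f (Submodule.Quotient.mk (1:R)) with hx
    have hxne : x ≠ 0 := by
      intro h
      refine hf (LinearMap.ext fun n => ?_)
      obtain ⟨z, rfl⟩ := Submodule.Quotient.mk_surjective m n
      have h1 : (Submodule.Quotient.mk z : R ⧸ m) = z • Submodule.Quotient.mk (1:R) := by
        rw [← Submodule.Quotient.mk_smul, smul_eq_mul, mul_one]
      rw [h1, map_smul, ← hx, h, smul_zero, LinearMap.zero_apply]
    have hmx : ∀ a ∈ m, a • x = 0 := by
      intro a ha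
      rw [hx, ← map_smul]
      have h1 : a • (Submodule.Quotient.mk (1:R) : R ⧸ m) = Submodule.Quotient.mk a := by
        rw [← Submodule.Quotient.mk_smul, smul_eq_mul, mul_one]
      rw [h1, (Submodule.Quotient.mk_eq_zero m).mpr ha, map_zero]
    set ξ : LocalizedModule m.primeCompl E := LocalizedModule.mkLinearMap m.primeCompl E x
      with hξdef
    have hξ : ξ ≠ 0 := by
      intro h
      obtain ⟨u, hu⟩ := (mem_kerMk_iff m.primeCompl x).mp (LinearMap.mem_ker.mpr h)
      have hIw := isWIdeal_torsionOf htf x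
      have hIne : Ideal.torsionOf R E x ≠ ⊤ := by
        intro h'
        apply hxne
        have h1 : (1:R) ∈ Ideal.torsionOf R E x := h' ▸ Submodule.mem_top
        rw [Ideal.mem_torsionOf_iff, one_smul] at h1
        exact h1
      have hlem : m ≤ Ideal.torsionOf R E x := fun a ha =>
        (Ideal.mem_torsionOf_iff x a).mpr (hmx a ha)
      have hEq := hm.2.2 _ hIw hIne hlem
      have humem : (u : R) ∈ Ideal.torsionOf R E x := by
        rw [Ideal.mem_torsionOf_iff, ← Submonoid.smul_def]
        exact hu
      rw [hEq] at humem
      exact u.2 humem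
    have hkill : IsLocalRing.maximalIdeal (Localization.AtPrime m) ≤
        LinearMap.ker (LinearMap.toSpanSingleton (Localization.AtPrime m)
          (LocalizedModule m.primeCompl E) ξ) := by
      rw [← Localization.AtPrime.map_eq_maximalIdeal, Ideal.map_le_iff_le_comap]
      intro a ha
      rw [Ideal.mem_comap, LinearMap.mem_ker, LinearMap.toSpanSingleton_apply,
        algebraMap_smul, hξdef, ← map_smul, show a • x = 0 from hmx a ha, map_zero]
    obtain ⟨n1, n2, hn12⟩ := hN
    set x0 := n1 - n2 with hx0
    have hx0ne : x0 ≠ 0 := sub_ne_zero.mpr hn12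
    set ts := LinearMap.toSpanSingleton (Localization.AtPrime m) N x0 with hts
    have hker_ne : LinearMap.ker ts ≠ ⊤ := by
      intro h
      apply hx0ne
      have h1 : (1 : Localization.AtPrime m) ∈ LinearMap.ker ts := h ▸ Submodule.mem_top
      rw [LinearMap.mem_ker, hts, LinearMap.toSpanSingleton_apply, one_smul] at h1
      exact h1
    have hker_le := IsLocalRing.le_maximalIdeal hker_ne
    set ν := Submodule.liftQ (LinearMap.ker ts)
      (LinearMap.toSpanSingleton (Localization.AtPrime m) (LocalizedModule m.primeCompl E) ξ)
      (le_trans hker_le hkill) with hν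
    set eqv := ts.quotKerEquivRange with heqv
    obtain ⟨F, hF⟩ := hinjLoc.out (LinearMap.range ts).subtype (Submodule.injective_subtype _)
      (ν.comp eqv.symm.toLinearMap)
    refine ⟨F, ?_⟩
    intro hF0
    have hx0mem : x0 ∈ LinearMap.range ts :=
      ⟨1, by rw [hts, LinearMap.toSpanSingleton_apply, one_smul]⟩
    have h1 : eqv (Submodule.Quotient.mk 1) = ⟨x0, hx0mem⟩ := by
      apply Subtype.ext
      rw [heqv]
      rw [LinearMap.quotKerEquivRange_apply_mk]
      show ts 1 = x0
      simp only [hts, LinearMap.toSpanSingleton_apply, one_smul]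
    have h2 : F x0 = ξ := by
      have h3 := hF ⟨x0, hx0mem⟩
      rw [Submodule.coe_subtype] at h3
      rw [show ((⟨x0, hx0mem⟩ : LinearMap.range ts) : N) = x0 from rfl] at h3
      rw [h3, LinearMap.comp_apply, LinearEquiv.coe_toLinearMap,
        show eqv.symm ⟨x0, hx0mem⟩ = Submodule.Quotient.mk 1 by
          rw [← h1, LinearEquiv.symm_apply_apply]]
      rw [hν, Submodule.liftQ_apply, LinearMap.toSpanSingleton_apply, one_smul]
    exact hξ (by rw [← h2, hF0, LinearMap.zero_apply])
  · intro hloc m hm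
    haveI hp : m.IsPrime := isMaxWIdeal_isPrime hm
    obtain ⟨-, hfaith⟩ := hloc m hm
    haveI : Nontrivial ((Localization.AtPrime m) ⧸
        (IsLocalRing.maximalIdeal (Localization.AtPrime m))) :=
      Submodule.Quotient.nontrivial_iff.mpr
        (lt_top_iff_ne_top.mpr (IsLocalRing.maximalIdeal.isMaximal _).ne_top).ne
    obtain ⟨f, hf⟩ := hfaith ((Localization.AtPrime m) ⧸
      (IsLocalRing.maximalIdeal (Localization.AtPrime m))) inferInstance
    set ξ := f (Submodule.Quotient.mk 1) with hξdef
    have hξ : ξ ≠ 0 := by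
      intro h
      refine hf (LinearMap.ext fun n => ?_)
      obtain ⟨z, rfl⟩ := Submodule.Quotient.mk_surjective _ n
      have h1 : (Submodule.Quotient.mk z : (Localization.AtPrime m) ⧸
          (IsLocalRing.maximalIdeal (Localization.AtPrime m))) =
          z • Submodule.Quotient.mk 1 := by
        rw [← Submodule.Quotient.mk_smul, smul_eq_mul, mul_one]
      rw [h1, map_smul, ← hξdef, h, smul_zero, LinearMap.zero_apply]
    have hmkill : ∀ a ∈ m, a • ξ = 0 := by
      intro a ha
      have h1 : algebraMap R (Localization.AtPrime m) a ∈
          IsLocalRing.maximalIdeal (Localization.AtPrime m) := by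
        rw [← Localization.AtPrime.map_eq_maximalIdeal]
        exact Ideal.mem_map_of_mem _ ha
      have h2 : (Submodule.Quotient.mk (algebraMap R (Localization.AtPrime m) a) :
          (Localization.AtPrime m) ⧸ (IsLocalRing.maximalIdeal (Localization.AtPrime m))) = 0 :=
        (Submodule.Quotient.mk_eq_zero _).mpr h1
      have h3 : algebraMap R (Localization.AtPrime m) a • ξ = 0 := by
        rw [hξdef, ← map_smul]
        have h4 : algebraMap R (Localization.AtPrime m) a •
            (Submodule.Quotient.mk 1 : (Localization.AtPrime m) ⧸
              (IsLocalRing.maximalIdeal (Localization.AtPrime m))) =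
            Submodule.Quotient.mk (algebraMap R (Localization.AtPrime m) a) := by
          rw [← Submodule.Quotient.mk_smul, smul_eq_mul, mul_one]
        rw [h4, h2, map_zero]
      rw [← algebraMap_smul (Localization.AtPrime m) a ξ]
      exact h3
    obtain ⟨e, s, hes⟩ := LocalizedModule.exists_rep ξ
    obtain ⟨u₀, hu₀, hstab⟩ := exists_stable hRN htf m.primeCompl e
    have hkill' : ∀ a ∈ m, a • (u₀ • e) = 0 := by
      intro a ha
      have h4 : a • ξ = LocalizedModule.mk (a • e) s := by
        rw [hes, LocalizedModule.smul'_mk]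
      rw [hmkill a ha] at h4
      have h5 : ∃ u : m.primeCompl, u • (a • e) = 0 := by
        rw [eq_comm, show (0 : LocalizedModule m.primeCompl E) = LocalizedModule.mk 0 1 from
          (LocalizedModule.zero_mk 1).symm, LocalizedModule.mk_eq] at h4
        obtain ⟨u, hu⟩ := h4
        exact ⟨u, by simpa using hu⟩
      obtain ⟨u, hu⟩ := h5
      refine hstab (u : R) u.2 a ?_
      have h6 : ((u : R) * a) • (u₀ • e) = u₀ • ((u : R) • (a • e)) := by
        simp only [smul_smul]
        congr 1
        ring
      rw [h6, show (u : R) • (a • e) = 0 from by rw [← Submonoid.smul_def]; exact hu, smul_zero]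
    have hene : u₀ • e ≠ 0 := by
      intro h
      apply hξ
      rw [hes, show (0 : LocalizedModule m.primeCompl E) = LocalizedModule.mk 0 1 from
        (LocalizedModule.zero_mk 1).symm]
      exact LocalizedModule.mk_eq.mpr ⟨⟨u₀, hu₀⟩, by simp [Submonoid.smul_def, h]⟩
    refine ⟨Submodule.liftQ m (LinearMap.toSpanSingleton R E (u₀ • e)) (fun a ha => by
      rw [LinearMap.mem_ker, LinearMap.toSpanSingleton_apply]
      exact hkill' a ha), ?_⟩
    intro h0
    apply hene
    rw [LinearMap.ext_iff] at h0
    have h7 := h0 (Submodule.Quotient.mk 1)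
    rw [Submodule.liftQ_apply, LinearMap.toSpanSingleton_apply, one_smul,
      LinearMap.zero_apply] at h7
    exact h7
end
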